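/- For symmetric positive definite matrices L, L̂ ∈ 𝒫(n), if every eigenvalue λ_j of L̂⁻¹L satisfies e^{−δ} ≤ λ_j ≤ e^{δ} for some δ > 0, then d_h(L‖L̂) ≤ (1/2) e^{δ} d_R(L,L̂)², where d_R(L,L̂)² = Σ_j (log λ_j)². -/

import Mathlib

open Matrix Polynomial

/-- Log-determinant Bregman divergence on n×n SPD matrices. -/
noncomputable def dh (n : ℕ) (L Lhat : Matrix (Fin n) (Fin n) ℝ) : ℝ :=
  Real.log (Lhat.det / L.det) + (Lhat⁻¹ * L).trace - n

lemma key_pt (δ t : ℝ) (h1 : -δ ≤ t) (h2 : t ≤ δ) :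
    Real.exp t - 1 - t ≤ (1/2) * Real.exp δ * t ^ 2 := by
  have hδ0 : 0 ≤ δ := by linarith
  set g : ℝ → ℝ := fun x => (1/2) * Real.exp δ * x ^ 2 + 1 + x - Real.exp x with hg
  have hder : ∀ x : ℝ, HasDerivAt g (Real.exp δ * x + 1 - Real.exp x) x := by
    intro x
    have hd1 : HasDerivAt (fun x : ℝ => (1/2) * Real.exp δ * x ^ 2)
        ((1/2) * Real.exp δ * (2 * x)) x := by
      simpa using (hasDerivAt_pow 2 x).const_mul ((1/2) * Real.exp δ)
    have := (((hd1.add_const 1).add (hasDerivAt_id x)).sub (Real.hasDerivAt_exp x))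
    exact this.congr_deriv (by ring)
  have hg0 : g 0 = 0 := by simp [hg]
  have hcont : Continuous g := by fun_prop
  suffices h : 0 ≤ g t by simp only [hg] at h; linarith
  have hexp1 : (1:ℝ) ≤ Real.exp δ := Real.one_le_exp hδ0
  rcases le_or_gt 0 t with ht | ht
  · have hmono : MonotoneOn g (Set.Icc 0 δ) := by
      apply monotoneOn_of_deriv_nonneg (convex_Icc 0 δ) hcont.continuousOn
      · intro x _; exact (hder x).differentiableAt.differentiableWithinAt
      · intro x hx
        rw [(hder x).deriv]
        rw [interior_Icc] at hx
        have hx0 : 0 < x := hx.1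
        have e1 : Real.exp x - 1 ≤ x * Real.exp x := by
          have h := Real.add_one_le_exp (-x)
          have hp : 0 < Real.exp x := Real.exp_pos x
          have h2 : (-x + 1) * Real.exp x ≤ Real.exp (-x) * Real.exp x :=
            mul_le_mul_of_nonneg_right h hp.le
          rw [← Real.exp_add] at h2
          simp only [neg_add_cancel, Real.exp_zero] at h2
          nlinarith
        have e2 : x * Real.exp x ≤ x * Real.exp δ :=
          mul_le_mul_of_nonneg_left (Real.exp_le_exp.2 hx.2.le) hx0.le
        linarith
    have := hmono (Set.mem_Icc.2 ⟨le_refl 0, hδ0⟩) (Set.mem_Icc.2 ⟨ht, h2⟩) ht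
    linarith [hg0 ▸ this]
  · have hanti : AntitoneOn g (Set.Icc (-δ) 0) := by
      apply antitoneOn_of_deriv_nonpos (convex_Icc (-δ) 0) hcont.continuousOn
      · intro x _; exact (hder x).differentiableAt.differentiableWithinAt
      · intro x hx
        rw [(hder x).deriv]
        rw [interior_Icc] at hx
        have hx0 : x < 0 := hx.2
        have e1 : Real.exp δ * x ≤ x := by nlinarith
        have e2 : x + 1 ≤ Real.exp x := Real.add_one_le_exp x
        linarith
    have := hanti (Set.mem_Icc.2 ⟨h1, ht.le⟩)
      (Set.mem_Icc.2 ⟨neg_nonpos_of_nonneg hδ0, le_refl 0⟩) ht.le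
    linarith [hg0 ▸ this]

lemma det_trace_of_charpoly (n : ℕ) (M : Matrix (Fin n) (Fin n) ℝ) (lam : Fin n → ℝ)
    (hchar : M.charpoly = ∏ j, (X - C (lam j))) :
    M.det = ∏ j, lam j ∧ M.trace = ∑ j, lam j := by
  have hsplit : M.charpoly.Splits := by
    rw [hchar]; exact Splits.prod fun j _ => Splits.X_sub_C _
  have hroots : M.charpoly.roots = Multiset.map lam Finset.univ.val := by
    rw [hchar, Finset.prod_eq_multiset_prod]
    have : Multiset.map (fun j => X - C (lam j)) Finset.univ.val
        = Multiset.map (fun a => X - C a) (Multiset.map lam Finset.univ.val) := by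
      rw [Multiset.map_map]; rfl
    rw [this, roots_multiset_prod_X_sub_C]
  constructor
  · rw [Matrix.det_eq_prod_roots_charpoly_of_splits hsplit, hroots]; rfl
  · rw [Matrix.trace_eq_sum_roots_charpoly_of_splits hsplit, hroots]; rfl

theorem bregman_le_half_exp_delta_dR_sq
    (n : ℕ) (L Lhat : Matrix (Fin n) (Fin n) ℝ)
    (hL : L.PosDef) (hLhat : Lhat.PosDef)
    (δ : ℝ) (hδ : 0 < δ)
    (lam : Fin n → ℝ)
    (hchar : (Lhat⁻¹ * L).charpoly = ∏ j, (X - C (lam j)))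
    (hb : ∀ j, Real.exp (-δ) ≤ lam j ∧ lam j ≤ Real.exp δ) :
    dh n L Lhat ≤ (1 / 2) * Real.exp δ * ∑ j, (Real.log (lam j)) ^ 2 := by
  obtain ⟨hdet, htr⟩ := det_trace_of_charpoly n (Lhat⁻¹ * L) lam hchar
  have hlampos : ∀ j, 0 < lam j := fun j => lt_of_lt_of_le (Real.exp_pos _) (hb j).1
  have hdetL : 0 < L.det := hL.det_pos
  have hdetLhat : 0 < Lhat.det := hLhat.det_pos
  have hdetmul : (Lhat⁻¹ * L).det = Lhat.det⁻¹ * L.det := by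
    rw [Matrix.det_mul, Matrix.det_nonsing_inv, Ring.inverse_eq_inv]
  have hratio : Lhat.det / L.det = (∏ j, lam j)⁻¹ := by
    rw [← hdet, hdetmul]
    field_simp
  have hlog : Real.log (Lhat.det / L.det) = -∑ j, Real.log (lam j) := by
    rw [hratio, Real.log_inv, Real.log_prod (fun j _ => (hlampos j).ne')]
  have hbound : ∀ j ∈ Finset.univ,
      lam j - 1 - Real.log (lam j) ≤ (1/2) * Real.exp δ * (Real.log (lam j)) ^ 2 := by
    intro j _
    have h1 : -δ ≤ Real.log (lam j) := by
      rw [← Real.log_exp (-δ)]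
      exact Real.log_le_log (Real.exp_pos _) (hb j).1
    have h2 : Real.log (lam j) ≤ δ := by
      rw [← Real.log_exp δ]
      exact Real.log_le_log (hlampos j) (hb j).2
    have := key_pt δ (Real.log (lam j)) h1 h2
    rwa [Real.exp_log (hlampos j)] at this
  have hsum := Finset.sum_le_sum hbound
  rw [← Finset.mul_sum] at hsum
  have hn : (n : ℝ) = ∑ _j : Fin n, (1:ℝ) := by simp
  unfold dh
  rw [hlog, htr, hn]
  have hkey : ∑ j, (lam j - 1 - Real.log (lam j))
      = -∑ j, Real.log (lam j) + ∑ j, lam j - ∑ _j : Fin n, (1:ℝ) := by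
    rw [Finset.sum_sub_distrib, Finset.sum_sub_distrib]
    ring
  linarith [hsum, hkey]
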